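/- arXiv:1912.08939 — 6 statements merged into one kernel-verified Lean document; each statement's English description precedes it below -/
import Mathlib

section
/- Let G = (V,E) be a finite, connected, loopless undirected graph with nonempty edge set E that is NOT 3-colorable, let ε ∈ [0,1], and let W¹, W² be deterministic strategies for the two provers in protocol Π²_loc that are well defined at every (i,r) ∈ V × 𝔽₃*: for every vertex i appearing in an edge and every r ∈ 𝔽₃*, all answers W¹(i,r,j,s), W²(i,r,k,t) for (i,j),(i,k) ∈ Edges(i) and s,t ∈ 𝔽₃* coincide; denote this common value W[i,r]. Then the probability, over questions drawn from D'_G with parameter ε, that the check-phase predicate of Π²_loc rejects is at least ε/(4·|E|). (Detection probability of the edge-verification test: the committed colours c_i := 2⁻¹·(W[i,r] + W[i,−r]) cannot form a proper 3-colouring, and a monochromatic edge is caught.) -/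
set_option maxHeartbeats 1000000


open Finset

/-- The field `𝔽₃` with three elements. -/
abbrev F3 := ZMod 3

/-- The nonzero elements `𝔽₃*` of `𝔽₃`. -/
abbrev F3s := {x : F3 // x ≠ 0}

/-- Negation on `𝔽₃*`. -/
def F3s.neg (r : F3s) : F3s := ⟨-r.1, by simpa using r.2⟩

/-- A question to a prover: an edge (ordered pair of vertices) together with a
nonzero challenge in `𝔽₃*` for each endpoint. -/
abbrev Question (n : ℕ) := (Fin n × Fin n) × F3s × F3s

/-- The edge set of a simple graph on `Fin n`, each edge written uniquely as an
ordered pair `(i, j)` with `i < j`. -/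
def edgeFinset' {n : ℕ} (G : SimpleGraph (Fin n)) [DecidableRel G.Adj] :
    Finset (Fin n × Fin n) :=
  Finset.univ.filter fun e => e.1 < e.2 ∧ G.Adj e.1 e.2

/-- `edgesAt G i` is the set `Edges(i)` of edges of `G` incident to vertex `i`. -/
def edgesAt {n : ℕ} (G : SimpleGraph (Fin n)) [DecidableRel G.Adj] (i : Fin n) :
    Finset (Fin n × Fin n) :=
  (edgeFinset' G).filter fun e => e.1 = i ∨ e.2 = i

/-- The question distribution `D'_G` with parameter `ε` of protocol `Π²_loc`:
pick `e = (i,j)` uniformly in `E` and `r, s` uniformly and independently in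
`𝔽₃*`; with probability `ε` set `(e',r',s') = (e,−r,−s)`; with probability
`1−ε` choose a uniformly random endpoint `h` of `e`, then pick `e'` uniformly in
`Edges(h)` and `r', s'` uniformly and independently in `𝔽₃*`.
`DprimeG G ε q₁ q₂` is the probability mass of the pair of questions `(q₁, q₂)`. -/
noncomputable def DprimeG {n : ℕ} (G : SimpleGraph (Fin n)) [DecidableRel G.Adj]
    (ε : ℝ) (q₁ q₂ : Question n) : ℝ :=
  (if q₁.1 ∈ edgeFinset' G then (1 : ℝ) / (edgeFinset' G).card else 0) * (1 / 4) *
    (ε * (if q₂ = (q₁.1, F3s.neg q₁.2.1, F3s.neg q₁.2.2) then 1 else 0)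
      + (1 - ε) * (1 / 2) *
          ((if q₂.1 ∈ edgesAt G q₁.1.1 then (1 : ℝ) / (edgesAt G q₁.1.1).card else 0)
            + (if q₂.1 ∈ edgesAt G q₁.1.2 then (1 : ℝ) / (edgesAt G q₁.1.2).card else 0))
        * (1 / 4))

/-- A deterministic strategy of a prover: `W i r j s ∈ 𝔽₃` is the prover's
answer for vertex `i` under challenge `r` when asked the edge `{i,j}` with
challenges `r` for `i` and `s` for `j`. -/
abbrev ProverStrategy (n : ℕ) := Fin n → F3s → Fin n → F3s → F3

/-- The pair of answers `(w_i, w_j) = (W(i,r,j,s), W(j,s,i,r))` a prover using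
strategy `W` gives on question `((i,j),r,s)`. -/
def answer {n : ℕ} (W : ProverStrategy n) (q : Question n) : F3 × F3 :=
  (W q.1.1 q.2.1 q.1.2 q.2.2, W q.1.2 q.2.2 q.1.1 q.2.1)

/-- The two (ordered-pair) edges are distinct and share exactly the vertex
`e.1 = e'.1`. -/
def sharesFst {n : ℕ} (e e' : Fin n × Fin n) : Prop :=
  e.1 = e'.1 ∧ e.2 ≠ e'.2 ∧ e.2 ≠ e'.1 ∧ e.1 ≠ e'.2

/-- The two (ordered-pair) edges are distinct and share exactly the vertex
`e.2 = e'.2`. -/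
def sharesSnd {n : ℕ} (e e' : Fin n × Fin n) : Prop :=
  e.2 = e'.2 ∧ e.1 ≠ e'.1 ∧ e.1 ≠ e'.2 ∧ e.2 ≠ e'.1

/-- The check-phase predicate of protocol `Π²_loc` on question `q₁ = ((i,j),r,s)`
to prover 1 with answers `w = (w_i, w_j)` and question `q₂ = ((i',j'),r',s')` to
prover 2 with answers `w' = (w'_{i'}, w'_{j'})`:
* (edge-verification test) if `(i,j) = (i',j')`, `r' ≠ r` and `s' ≠ s`, then
  `w_i + w'_i ≠ w_j + w'_j`;
* (well-definition test) if `(i,j) = (i',j')` and (`r' = r` or `s' = s`), then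
  (`w_i = w'_i` or `r ≠ r'`) and (`w_j = w'_j` or `s ≠ s'`);
* if the edges are distinct and share exactly the vertex `i = i'` and `r = r'`,
  then `w_i = w'_{i'}`;
* if the edges are distinct and share exactly the vertex `j = j'` and `s = s'`,
  then `w_j = w'_{j'}`;
* in all remaining cases the verifier accepts. -/
def accepts {n : ℕ} (q₁ q₂ : Question n) (w w' : F3 × F3) : Prop :=
  ((q₁.1 = q₂.1 ∧ q₂.2.1 ≠ q₁.2.1 ∧ q₂.2.2 ≠ q₁.2.2) →
      w.1 + w'.1 ≠ w.2 + w'.2)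
  ∧ ((q₁.1 = q₂.1 ∧ (q₂.2.1 = q₁.2.1 ∨ q₂.2.2 = q₁.2.2)) →
      ((w.1 = w'.1 ∨ q₁.2.1 ≠ q₂.2.1) ∧ (w.2 = w'.2 ∨ q₁.2.2 ≠ q₂.2.2)))
  ∧ ((sharesFst q₁.1 q₂.1 ∧ q₁.2.1 = q₂.2.1) → w.1 = w'.1)
  ∧ ((sharesSnd q₁.1 q₂.1 ∧ q₁.2.2 = q₂.2.2) → w.2 = w'.2)

instance {n : ℕ} (q₁ q₂ : Question n) (w w' : F3 × F3) :
    Decidable (accepts q₁ q₂ w w') := by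
  unfold accepts sharesFst sharesSnd; infer_instance

/-- `G` is 3-colorable: a proper colouring `c : V → 𝔽₃`. -/
def ThreeColorable {n : ℕ} (G : SimpleGraph (Fin n)) [DecidableRel G.Adj] : Prop :=
  ∃ c : Fin n → F3, ∀ e ∈ edgeFinset' G, c e.1 ≠ c e.2


def F3one : F3s := ⟨1, by decide⟩
def F3two : F3s := ⟨2, by decide⟩

lemma F3neg_one : F3s.neg F3one = F3two := by decide
lemma F3two_ne_one : F3two ≠ F3one := by decide

lemma dprime_aux (C ε A : ℝ) (hC : 0 < C) (hA : 0 ≤ A) :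
    ε / (4 * C) ≤ 1 / C * (1 / 4) * (ε * 1 + A) := by
  have h : ε / (4 * C) = 1 / C * (1 / 4) * (ε * 1) := by ring
  rw [h]
  apply mul_le_mul_of_nonneg_left (by linarith) (by positivity)

/-- **Detection probability of the edge-verification test.**
Let `G = (V,E)` be a finite, connected, loopless undirected graph with nonempty
edge set that is not 3-colorable, let `ε ∈ [0,1]`, and let `W₁, W₂` be
deterministic strategies for the two provers of `Π²_loc` that are well defined
at every `(i, r)`: for every vertex `i`, challenge `r ∈ 𝔽₃*`, edges
`(i,j), (i,k) ∈ Edges(i)` and challenges `s, t ∈ 𝔽₃*`, the answers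
`W₁(i,r,j,s)` and `W₂(i,r,k,t)` coincide.  Then the probability, over questions
drawn from `D'_G` with parameter `ε`, that the check-phase predicate rejects is
at least `ε/(4·|E|)`. -/
theorem edge_verification_test_detection {n : ℕ}
    (G : SimpleGraph (Fin n)) [DecidableRel G.Adj]
    (hconn : G.Connected) (hE : (edgeFinset' G).Nonempty)
    (h3col : ¬ ThreeColorable G)
    (ε : ℝ) (hε : ε ∈ Set.Icc (0 : ℝ) 1)
    (W₁ W₂ : ProverStrategy n)
    (hwd : ∀ (i : Fin n) (r : F3s) (j k : Fin n) (s t : F3s),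
      G.Adj i j → G.Adj i k → W₁ i r j s = W₂ i r k t) :
    ε / (4 * (edgeFinset' G).card)
      ≤ ∑ q₁ : Question n, ∑ q₂ : Question n,
          DprimeG G ε q₁ q₂ *
            (if accepts q₁ q₂ (answer W₁ q₁) (answer W₂ q₂) then (0 : ℝ) else 1) := by
  
  classical
  obtain ⟨hε0, hε1⟩ := hε
  have hcard : 0 < ((edgeFinset' G).card : ℝ) := by
    exact_mod_cast Finset.card_pos.mpr hE
  let c : Fin n → F3 := fun i =>
    if h : ∃ j, G.Adj i j then
      W₁ i F3one h.choose F3one + W₁ i F3two h.choose F3one else 0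
  obtain ⟨e, he, hce⟩ : ∃ e ∈ edgeFinset' G, c e.1 = c e.2 := by
    by_contra h
    push_neg at h
    exact h3col ⟨c, h⟩
  have hadj : G.Adj e.1 e.2 := by
    simp only [edgeFinset', Finset.mem_filter] at he
    exact he.2.2
  have hadj' : G.Adj e.2 e.1 := hadj.symm
  have hcval : ∀ i j, G.Adj i j → c i = W₁ i F3one j F3one + W₂ i F3two j F3two := by
    intro i j hij
    have hex : ∃ k, G.Adj i k := ⟨j, hij⟩
    have hch : G.Adj i hex.choose := hex.choose_spec
    have h1 : W₁ i F3one hex.choose F3one = W₁ i F3one j F3one := by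
      rw [hwd i F3one hex.choose j F3one F3one hch hij,
        hwd i F3one j j F3one F3one hij hij]
    have h2 : W₁ i F3two hex.choose F3one = W₂ i F3two j F3two :=
      hwd i F3two hex.choose j F3one F3two hch hij
    simp only [c, dif_pos hex, h1, h2]
  set q₁ : Question n := (e, F3one, F3one) with hq₁
  set q₂ : Question n := (e, F3two, F3two) with hq₂
  have hrej : ¬ accepts q₁ q₂ (answer W₁ q₁) (answer W₂ q₂) := by
    intro hacc
    apply hacc.1 ⟨rfl, F3two_ne_one, F3two_ne_one⟩
    show W₁ e.1 F3one e.2 F3one + W₂ e.1 F3two e.2 F3two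
        = W₁ e.2 F3one e.1 F3one + W₂ e.2 F3two e.1 F3two
    rw [← hcval e.1 e.2 hadj, ← hcval e.2 e.1 hadj', hce]
  have hnn : ∀ a b : Question n,
      0 ≤ DprimeG G ε a b *
        (if accepts a b (answer W₁ a) (answer W₂ b) then (0 : ℝ) else 1) := by
    intro a b
    have h1ε : (0 : ℝ) ≤ 1 - ε := by linarith
    refine mul_nonneg ?_ (by split <;> norm_num)
    unfold DprimeG
    refine mul_nonneg (mul_nonneg ?_ (by norm_num)) ?_
    · split <;> positivity
    refine add_nonneg (mul_nonneg hε0 (by split <;> norm_num)) ?_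
    refine mul_nonneg (mul_nonneg (mul_nonneg (by linarith) (by norm_num)) ?_) (by norm_num)
    refine add_nonneg ?_ ?_ <;> (split <;> positivity)
  have hq2eq : q₂ = (q₁.1, F3s.neg q₁.2.1, F3s.neg q₁.2.2) := by
    simp only [hq₁, hq₂, F3neg_one]
  have hterm : ε / (4 * (edgeFinset' G).card)
      ≤ DprimeG G ε q₁ q₂ *
        (if accepts q₁ q₂ (answer W₁ q₁) (answer W₂ q₂) then (0 : ℝ) else 1) := by
    rw [if_neg hrej, mul_one]
    unfold DprimeG
    rw [if_pos (show q₁.1 ∈ edgeFinset' G from he), if_pos hq2eq]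
    refine dprime_aux _ ε _ hcard ?_
    refine mul_nonneg (mul_nonneg (mul_nonneg (by linarith) (by norm_num)) ?_) (by norm_num)
    refine add_nonneg ?_ ?_ <;> (split <;> positivity)
  calc ε / (4 * (edgeFinset' G).card)
      ≤ DprimeG G ε q₁ q₂ *
          (if accepts q₁ q₂ (answer W₁ q₁) (answer W₂ q₂) then (0 : ℝ) else 1) := hterm
    _ ≤ ∑ b : Question n, DprimeG G ε q₁ b *
          (if accepts q₁ b (answer W₁ q₁) (answer W₂ b) then (0 : ℝ) else 1) :=
        Finset.single_le_sum (fun b _ => hnn q₁ b) (Finset.mem_univ q₂)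
    _ ≤ ∑ a : Question n, ∑ b : Question n, DprimeG G ε a b *
          (if accepts a b (answer W₁ a) (answer W₂ b) then (0 : ℝ) else 1) :=
        Finset.single_le_sum
          (fun a _ => Finset.sum_nonneg fun b _ => hnn a b) (Finset.mem_univ q₁)
end

section
/- Let G be a simple graph and let e₁, e₂, e₃ be (not necessarily distinct) edges of G. If u and v are distinct vertices such that u is an endpoint of at least two of the edges e₁, e₂, e₃ (counting indices) and v is an endpoint of at least two of the edges e₁, e₂, e₃ (counting indices), then the unordered pair {u,v} equals one of e₁, e₂, e₃; in particular u and v are adjacent in G. (Zero-knowledge core lemma: any two vertices whose colours can be implicitly unveiled from three edge-questions must form an edge of G.) -/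
open Finset

/-- **Zero-knowledge core lemma (two unveiled vertices form an edge).**
Let `G` be a simple graph and `e₁, e₂, e₃` (indexed by `Fin 3`, not necessarily
distinct) be edges of `G`.  If `u ≠ v` are vertices each of which is an endpoint
of at least two of the three edges (counting indices), then the unordered pair
`s(u,v)` equals one of the three edges; in particular `u` and `v` are adjacent. -/
theorem two_unveiled_vertices_form_edge {V : Type*} [DecidableEq V]
    (G : SimpleGraph V) (e : Fin 3 → Sym2 V)
    (he : ∀ a, e a ∈ G.edgeSet) (u v : V) (huv : u ≠ v)
    (hu : 2 ≤ (Finset.univ.filter fun a => u ∈ e a).card)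
    (hv : 2 ≤ (Finset.univ.filter fun a => v ∈ e a).card) :
    (∃ a, e a = s(u, v)) ∧ G.Adj u v := by
  have hinter : ((Finset.univ.filter fun a => u ∈ e a) ∩
      (Finset.univ.filter fun a => v ∈ e a)).Nonempty := by
    rw [← Finset.card_pos]
    have hle : ((Finset.univ.filter fun a => u ∈ e a) ∪
        (Finset.univ.filter fun a => v ∈ e a)).card ≤ 3 := by
      calc _ ≤ (Finset.univ : Finset (Fin 3)).card := Finset.card_le_card (by simp)
        _ = 3 := by simp
    have := Finset.card_union_add_card_inter
      (Finset.univ.filter fun a => u ∈ e a) (Finset.univ.filter fun a => v ∈ e a)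
    omega
  obtain ⟨a, ha⟩ := hinter
  simp only [Finset.mem_inter, Finset.mem_filter, Finset.mem_univ, true_and] at ha
  have heq : e a = s(u, v) := ((Sym2.mem_and_mem_iff huv).mp ha)
  refine ⟨⟨a, heq⟩, ?_⟩
  have := he a
  rw [heq] at this
  exact this
end

section
/- Let G be a simple graph and let e₁, e₂, e₃ be (not necessarily distinct) edges of G. Let S be the set of vertices that are endpoints of at least two of the edges e₁, e₂, e₃ (counting indices). Then |S| ≤ 3, and if |S| = 3 then the three vertices of S are pairwise adjacent in G, i.e., they form a triangle. (Zero-knowledge core lemma: three edge-questions can unveil the colours of at most three vertices, and three vertices only when they form a triangle of G.) -/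
open Finset

/-- **Zero-knowledge core lemma (at most three vertices unveiled, three only if a
triangle).**  Let `G` be a simple graph and `e₁, e₂, e₃` (indexed by `Fin 3`,
not necessarily distinct) be edges of `G`, and let `S` be the set of vertices
that are endpoints of at least two of the three edges (counting indices).  Then
`|S| ≤ 3`, and if `|S| = 3` then the three vertices of `S` are pairwise adjacent
in `G`, i.e. they form a triangle. -/
theorem unveiled_vertices_triangle {V : Type*} [DecidableEq V]
    (G : SimpleGraph V) (e : Fin 3 → Sym2 V)
    (he : ∀ a, e a ∈ G.edgeSet) :
    ({v : V | 2 ≤ (Finset.univ.filter fun a => v ∈ e a).card} : Set V).ncard ≤ 3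
    ∧ (({v : V | 2 ≤ (Finset.univ.filter fun a => v ∈ e a).card} : Set V).ncard = 3 →
        ∀ u ∈ {v : V | 2 ≤ (Finset.univ.filter fun a => v ∈ e a).card},
        ∀ w ∈ {v : V | 2 ≤ (Finset.univ.filter fun a => v ∈ e a).card},
          u ≠ w → G.Adj u w) := by
  -- choose endpoints of each edge
  have hxy : ∀ a, ∃ x y, e a = s(x, y) ∧ G.Adj x y := by
    intro a
    obtain ⟨⟨x, y⟩, hq⟩ := Quot.exists_rep (e a)
    refine ⟨x, y, hq.symm, ?_⟩
    rw [← SimpleGraph.mem_edgeSet]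
    have : s(x, y) = e a := hq
    rw [this]; exact he a
  choose f g hfg hadj using hxy
  have hmem : ∀ a (v : V), v ∈ e a ↔ v = f a ∨ v = g a := by
    intro a v; rw [hfg a, Sym2.mem_iff]
  -- the adjacency claim (doesn't need the cardinality hypothesis)
  have adjclaim : ∀ u ∈ {v : V | 2 ≤ (Finset.univ.filter fun a => v ∈ e a).card},
      ∀ w ∈ {v : V | 2 ≤ (Finset.univ.filter fun a => v ∈ e a).card},
      u ≠ w → G.Adj u w := by
    intro u hu w hw huw
    simp only [Set.mem_setOf_eq] at hu hw
    set A := Finset.univ.filter fun a => u ∈ e a with hA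
    set B := Finset.univ.filter fun a => w ∈ e a with hB
    have hcap : 1 ≤ (A ∩ B).card := by
      have h1 := Finset.card_inter_add_card_union A B
      have h2 : (A ∪ B).card ≤ 3 := by
        have := Finset.card_le_univ (A ∪ B)
        simpa using this
      omega
    have hne : (A ∩ B).Nonempty := Finset.card_pos.mp hcap
    obtain ⟨a, ha⟩ := hne
    rw [Finset.mem_inter, hA, hB, Finset.mem_filter, Finset.mem_filter] at ha
    have hu' := (hmem a u).mp ha.1.2
    have hw' := (hmem a w).mp ha.2.2
    rcases hu' with rfl | rfl <;> rcases hw' with rfl | rfl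
    · exact absurd rfl huw
    · exact hadj a
    · exact (hadj a).symm
    · exact absurd rfl huw
  refine ⟨?_, fun _ => adjclaim⟩
  -- cardinality bound by double counting
  set T : Finset V := Finset.univ.image f ∪ Finset.univ.image g with hT
  set S' : Finset V := T.filter fun v => 2 ≤ (Finset.univ.filter fun a => v ∈ e a).card
    with hS'
  have hSeq : ({v : V | 2 ≤ (Finset.univ.filter fun a => v ∈ e a).card} : Set V) = ↑S' := by
    ext v
    simp only [Set.mem_setOf_eq, hS', Finset.coe_filter, Set.mem_setOf_eq, Finset.mem_coe]
    constructor
    · intro hv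
      refine ⟨?_, hv⟩
      have hpos : 0 < (Finset.univ.filter fun a => v ∈ e a).card := by omega
      obtain ⟨a, ha⟩ := Finset.card_pos.mp hpos
      rw [Finset.mem_filter] at ha
      rcases (hmem a v).mp ha.2 with rfl | rfl
      · exact Finset.mem_union_left _ (Finset.mem_image_of_mem f (Finset.mem_univ a))
      · exact Finset.mem_union_right _ (Finset.mem_image_of_mem g (Finset.mem_univ a))
    · exact fun h => h.2
  rw [hSeq, Set.ncard_coe_finset]
  -- total incidence count is at most 6
  have hsumT : ∑ v ∈ T, (Finset.univ.filter fun a => v ∈ e a).card ≤ 6 := by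
    have hswap : ∑ v ∈ T, (Finset.univ.filter fun a => v ∈ e a).card
        = ∑ a : Fin 3, (T.filter fun v => v ∈ e a).card := by
      simp only [Finset.card_filter]
      exact Finset.sum_comm
    rw [hswap]
    have hbnd : ∀ a : Fin 3, (T.filter fun v => v ∈ e a).card ≤ 2 := by
      intro a
      have hsub : T.filter (fun v => v ∈ e a) ⊆ {f a, g a} := by
        intro v hv
        rw [Finset.mem_filter] at hv
        rcases (hmem a v).mp hv.2 with rfl | rfl
        · exact Finset.mem_insert_self _ _
        · exact Finset.mem_insert_of_mem (Finset.mem_singleton_self _)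
      calc (T.filter fun v => v ∈ e a).card ≤ ({f a, g a} : Finset V).card :=
            Finset.card_le_card hsub
        _ ≤ 2 := Finset.card_insert_le _ _ |>.trans (by simp)
    calc ∑ a : Fin 3, (T.filter fun v => v ∈ e a).card ≤ ∑ _a : Fin 3, 2 :=
          Finset.sum_le_sum fun a _ => hbnd a
      _ = 6 := by simp
  have h2S : 2 * S'.card ≤ ∑ v ∈ T, (Finset.univ.filter fun a => v ∈ e a).card := by
    calc 2 * S'.card = ∑ _v ∈ S', 2 := by rw [Finset.sum_const]; ring
      _ ≤ ∑ v ∈ S', (Finset.univ.filter fun a => v ∈ e a).card :=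
          Finset.sum_le_sum fun v hv => (Finset.mem_filter.mp hv).2
      _ ≤ ∑ v ∈ T, (Finset.univ.filter fun a => v ∈ e a).card :=
          Finset.sum_le_sum_of_subset (Finset.filter_subset _ _)
  omega
end

section
/- Let G be a simple graph on vertex set V, let c : V → 𝔽₃ be a proper 3-colouring of G (c(i) ≠ c(j) whenever i and j are adjacent), and let i, j be adjacent vertices of G. If σ is a uniformly random permutation of 𝔽₃, then the pair (σ(c(i)), σ(c(j))) is uniformly distributed over the set of ordered pairs (x,y) ∈ 𝔽₃ × 𝔽₃ with x ≠ y (a set of six pairs). (The colours unveiled for the two endpoints of an edge in the protocol are two distinct uniformly random colours.) -/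
lemma perm_count (a b x y : ZMod 3) (hab : a ≠ b) :
    (Finset.univ.filter fun σ : Equiv.Perm (ZMod 3) =>
        ((x, y) : ZMod 3 × ZMod 3) = (σ a, σ b)).card
      = if x ≠ y then 1 else 0 := by
  revert hab; revert a b x y; decide

/-- **Edge colours are two distinct uniformly random colours.**
Let `c` be a proper 3-colouring of a simple graph `G` and let `i, j` be adjacent
vertices.  If `σ` is a uniformly random permutation of `𝔽₃` then the pair
`(σ(c i), σ(c j))` is uniformly distributed over the six ordered pairs
`(x, y) ∈ 𝔽₃ × 𝔽₃` with `x ≠ y`. -/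
theorem unveiled_edge_colours_uniform {V : Type*} (G : SimpleGraph V)
    (c : V → ZMod 3) (hc : ∀ u v : V, G.Adj u v → c u ≠ c v)
    (i j : V) (hij : G.Adj i j) :
    PMF.map (fun σ : Equiv.Perm (ZMod 3) => (σ (c i), σ (c j)))
        (PMF.uniformOfFintype (Equiv.Perm (ZMod 3)))
      = PMF.uniformOfFinset
          (Finset.univ.filter fun p : ZMod 3 × ZMod 3 => p.1 ≠ p.2)
          (by decide) := by
  have hab := hc i j hij
  ext ⟨x, y⟩
  rw [PMF.map_apply, PMF.uniformOfFinset_apply, tsum_fintype]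
  simp only [PMF.uniformOfFintype_apply]
  rw [← Finset.sum_filter, Finset.sum_const, perm_count _ _ _ _ hab]
  have hcard : (Fintype.card (Equiv.Perm (ZMod 3)) : ENNReal)⁻¹ = 6⁻¹ := by
    norm_num [Fintype.card_perm, Nat.factorial]
  have hcard2 : ((Finset.univ.filter fun p : ZMod 3 × ZMod 3 => p.1 ≠ p.2).card : ENNReal) = 6 := by
    norm_num [show (Finset.univ.filter fun p : ZMod 3 × ZMod 3 => p.1 ≠ p.2).card = 6 from by decide]
  by_cases hxy : x ≠ y
  · rw [if_pos hxy, if_pos (by simpa using hxy), one_smul, hcard, hcard2]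
  · rw [if_neg hxy, if_neg (by simpa using hxy), zero_smul]
end

section
/- Let G be a simple graph on vertex set V, let c : V → 𝔽₃ be a proper 3-colouring of G, and let i, j, k be pairwise adjacent vertices of G (a triangle). If σ is a uniformly random permutation of 𝔽₃, then the triple (σ(c(i)), σ(c(j)), σ(c(k))) is uniformly distributed over the set of ordered triples of pairwise distinct elements of 𝔽₃ (a set of six triples). (The colours unveiled for the three vertices of a triangle in the protocol are three distinct colours assigned uniformly at random.) -/
/-- **Triangle colours are three distinct colours assigned uniformly at random.**
Let `c` be a proper 3-colouring of a simple graph `G` and let `i, j, k` be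
pairwise adjacent vertices (a triangle).  If `σ` is a uniformly random
permutation of `𝔽₃` then the triple `(σ(c i), σ(c j), σ(c k))` is uniformly
distributed over the six ordered triples of pairwise distinct elements of `𝔽₃`. -/
theorem unveiled_triangle_colours_uniform {V : Type*} (G : SimpleGraph V)
    (c : V → ZMod 3) (hc : ∀ u v : V, G.Adj u v → c u ≠ c v)
    (i j k : V) (hij : G.Adj i j) (hik : G.Adj i k) (hjk : G.Adj j k) :
    PMF.map (fun σ : Equiv.Perm (ZMod 3) => (σ (c i), σ (c j), σ (c k)))
        (PMF.uniformOfFintype (Equiv.Perm (ZMod 3)))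
      = PMF.uniformOfFinset
          (Finset.univ.filter fun p : ZMod 3 × ZMod 3 × ZMod 3 =>
            p.1 ≠ p.2.1 ∧ p.1 ≠ p.2.2 ∧ p.2.1 ≠ p.2.2)
          (by decide) := by
  have h1 : c i ≠ c j := hc i j hij
  have h2 : c i ≠ c k := hc i k hik
  have h3 : c j ≠ c k := hc j k hjk
  have key : ∀ a b d : ZMod 3, a ≠ b → a ≠ d → b ≠ d →
      ∀ p : ZMod 3 × ZMod 3 × ZMod 3,
      (Finset.univ.filter (fun σ : Equiv.Perm (ZMod 3) => p = (σ a, σ b, σ d))).card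
        = if p ∈ (Finset.univ.filter fun p : ZMod 3 × ZMod 3 × ZMod 3 =>
            p.1 ≠ p.2.1 ∧ p.1 ≠ p.2.2 ∧ p.2.1 ≠ p.2.2) then 1 else 0 := by decide
  have hcard : (Finset.univ.filter fun p : ZMod 3 × ZMod 3 × ZMod 3 =>
      p.1 ≠ p.2.1 ∧ p.1 ≠ p.2.2 ∧ p.2.1 ≠ p.2.2).card = 6 := by decide
  ext p
  rw [PMF.map_apply, PMF.uniformOfFinset_apply, tsum_fintype]
  trans ((Finset.univ.filter (fun σ : Equiv.Perm (ZMod 3) =>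
      p = (σ (c i), σ (c j), σ (c k)))).card • (6 : ENNReal)⁻¹)
  · simp only [PMF.uniformOfFintype_apply, Fintype.card_perm, Finset.sum_ite,
      Finset.sum_const, Finset.sum_const_zero, add_zero]
    norm_num [Nat.factorial]
  · rw [key _ _ _ h1 h2 h3 p]
    split <;> simp [hcard]
end

section
/- Let G = (V,E) be a finite, connected, loopless undirected graph with nonempty edge set E, let c : V → 𝔽₃ be a proper 3-colouring of G (c(i) ≠ c(j) for every edge (i,j) ∈ E), and let b : V → 𝔽₃ be arbitrary masks. Define the honest strategy W(i,r,j,s) = b(i)·r + c(i) for every edge {i,j} ∈ E and r, s ∈ 𝔽₃*, used by both provers. Then for every pair of questions ((i,j),r,s) and ((i',j'),r',s') with (i,j), (i',j') ∈ E and r, s, r', s' ∈ 𝔽₃*, the check-phase predicate of protocol Π²_loc accepts the honest answers. (Perfect completeness of Π²_loc: honest provers holding a valid 3-colouring are accepted with probability 1.) -/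
open Finset

lemma F3_neg_of_ne {r r' : F3} (hr : r ≠ 0) (hr' : r' ≠ 0) (h : r' ≠ r) : r' = -r := by
  revert hr hr' h; revert r r'; decide

/-- **Perfect completeness of `Π²_loc`.**
Let `G = (V,E)` be a finite, connected, loopless undirected graph with nonempty
edge set, `c : V → 𝔽₃` a proper 3-colouring of `G` and `b : V → 𝔽₃` arbitrary
masks, and let both provers use the honest strategy
`W(i,r,j,s) = b(i)·r + c(i)` (defined on every edge `{i,j} ∈ E`).  Then for
every pair of questions `((i,j),r,s)` and `((i',j'),r',s')` with
`(i,j), (i',j') ∈ E`, the check-phase predicate of `Π²_loc` accepts the honest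
answers. -/
theorem completeness_two_prover_local {n : ℕ}
    (G : SimpleGraph (Fin n)) [DecidableRel G.Adj]
    (hconn : G.Connected) (hE : (edgeFinset' G).Nonempty)
    (c : Fin n → F3) (hc : ∀ e ∈ edgeFinset' G, c e.1 ≠ c e.2)
    (b : Fin n → F3)
    (W : ProverStrategy n)
    (hW : ∀ (i : Fin n) (r : F3s) (j : Fin n) (s : F3s),
      G.Adj i j → W i r j s = b i * r.1 + c i) :
    ∀ q₁ q₂ : Question n, q₁.1 ∈ edgeFinset' G → q₂.1 ∈ edgeFinset' G →
      accepts q₁ q₂ (answer W q₁) (answer W q₂) := by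
  rintro ⟨⟨i,j⟩,r,s⟩ ⟨⟨i',j'⟩,r',s'⟩ h1 h2
  simp only [edgeFinset', Finset.mem_filter, Finset.mem_univ, true_and] at h1 h2
  obtain ⟨hlt1, hadj1⟩ := h1
  obtain ⟨hlt2, hadj2⟩ := h2
  have hcij : c i ≠ c j := hc (i,j) (by simp [edgeFinset', hlt1, hadj1])
  have A1 := hW i r j s hadj1
  have A2 := hW j s i r hadj1.symm
  have B1 := hW i' r' j' s' hadj2
  have B2 := hW j' s' i' r' hadj2.symm
  refine ⟨?_, ?_, ?_, ?_⟩
  · rintro ⟨heq, hr, hs⟩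
    obtain ⟨rfl, rfl⟩ := Prod.mk.injEq .. ▸ heq
    have hr' : r'.1 = -r.1 := F3_neg_of_ne r.2 r'.2 (fun h => hr (Subtype.ext h))
    simp only [answer, A1, A2, B1, B2, hr',
      F3_neg_of_ne s.2 s'.2 (fun h => hs (Subtype.ext h))]
    intro h
    have h2 : (2:F3) * c i = 2 * c j := by linear_combination h
    exact hcij (mul_left_cancel₀ (by decide : (2:F3) ≠ 0) h2)
  · rintro ⟨heq, -⟩
    obtain ⟨rfl, rfl⟩ := Prod.mk.injEq .. ▸ heq
    constructor
    · rcases eq_or_ne r r' with h | h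
      · exact Or.inl (by simp only [answer]; rw [A1, B1, h])
      · exact Or.inr h
    · rcases eq_or_ne s s' with h | h
      · exact Or.inl (by simp only [answer]; rw [A2, B2, h])
      · exact Or.inr h
  · rintro ⟨⟨hii, -⟩, hrr⟩
    simp only [answer, A1, B1]
    simp at hii
    have hr2 : r = r' := hrr
    rw [hii, hr2]
  · rintro ⟨⟨hjj, -⟩, hss⟩
    simp only [answer, A2, B2]
    simp at hjj
    have hs2 : s = s' := hss
    rw [hjj, hs2]
end
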